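/- Let G be a group acting by isometries on a 1-hyperbolic geodesic metric space (X,d) with base point x ∈ X, let f, g, h ∈ G and let D > 0. Let τ be a subsegment of length 3D of a geodesic segment [x, ghfx]. Then the 24-neighborhood of τ contains a subsegment of length at least D − 40 of one of the geodesic segments [x, gx], g[x, hx], or gh[x, fx]. -/

import Mathlib

set_option linter.unusedVariables false

/-- A geodesic segment from `a` to `b`: the image of an isometric
parameterization of the interval `[0, dist a b]`. -/
def IsGeodesicSegment {X : Type*} [MetricSpace X] (s : Set X) (a b : X) : Prop :=
  ∃ f : ℝ → X, f 0 = a ∧ f (dist a b) = b ∧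
    (∀ t₁ ∈ Set.Icc (0 : ℝ) (dist a b), ∀ t₂ ∈ Set.Icc (0 : ℝ) (dist a b),
      dist (f t₁) (f t₂) = |t₁ - t₂|) ∧
    s = f '' Set.Icc (0 : ℝ) (dist a b)

/-- A geodesic metric space: any two points are joined by a geodesic segment. -/
def GeodesicSpace (X : Type*) [MetricSpace X] : Prop :=
  ∀ a b : X, ∃ s : Set X, IsGeodesicSegment s a b

/-- `A` is contained in the `r`-neighborhood of `B`. -/
def InNbhd {X : Type*} [MetricSpace X] (A B : Set X) (r : ℝ) : Prop :=
  ∀ p ∈ A, ∃ q ∈ B, dist p q ≤ r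

/-- `δ`-hyperbolicity: every geodesic triangle is `δ`-thin, i.e. each side is
contained in the `δ`-neighborhood of the union of the other two sides. -/
def DeltaHyperbolic (X : Type*) [MetricSpace X] (δ : ℝ) : Prop :=
  ∀ a b c : X, ∀ sab sac sbc : Set X,
    IsGeodesicSegment sab a b → IsGeodesicSegment sac a c → IsGeodesicSegment sbc b c →
    InNbhd sab (sac ∪ sbc) δ

/-- Elementary Nielsen moves on an `n`-tuple of elements of a group. -/
inductive NielsenMove {G : Type*} [Group G] {n : ℕ} : (Fin n → G) → (Fin n → G) → Prop
  | inv (g : Fin n → G) (i : Fin n) : NielsenMove g (Function.update g i (g i)⁻¹)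
  | mul (g : Fin n → G) (i j : Fin n) (hij : i ≠ j) :
      NielsenMove g (Function.update g i (g i * g j))
  | swap (g : Fin n → G) (i j : Fin n) (hij : i ≠ j) :
      NielsenMove g (g ∘ Equiv.swap i j)

/-- Nielsen equivalence: a finite chain of elementary Nielsen moves. -/
def NielsenEquiv {G : Type*} [Group G] {n : ℕ} (M M' : Fin n → G) : Prop :=
  Relation.ReflTransGen NielsenMove M M'

/-- The word metric on the free group `F(x_1, …, x_n)`:
the length of the reduced word representing `w⁻¹ * v`. -/
noncomputable def freeDist {n : ℕ} (w v : FreeGroup (Fin n)) : ℝ :=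
  ((w⁻¹ * v).toWord.length : ℝ)

/-- The orbit map (on the subgroup generated by the tuple `g`, identified with
a quotient of the free group via `FreeGroup.lift g`) is a quasi-isometric embedding
with respect to the word metric of the basis `g`. -/
def OrbitQIEmbed {G X : Type*} [Group G] [MetricSpace X] [MulAction G X]
    {n : ℕ} (x : X) (g : Fin n → G) : Prop :=
  ∃ lam eps : ℝ, 1 ≤ lam ∧ 0 ≤ eps ∧ ∀ w v : FreeGroup (Fin n),
    lam⁻¹ * freeDist w v - eps ≤ dist ((FreeGroup.lift g w) • x) ((FreeGroup.lift g v) • x) ∧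
    dist ((FreeGroup.lift g w) • x) ((FreeGroup.lift g v) • x) ≤ lam * freeDist w v + eps

/-- The sum of the displacements `|g_i|_x` of the members of a tuple. -/
noncomputable def tupleLen {G X : Type*} [Group G] [MetricSpace X] [MulAction G X]
    {n : ℕ} (x : X) (M : Fin n → G) : ℝ :=
  ∑ i, dist x (M i • x)

/-- A minimal tuple: `|M|_x ≤ |M'|_x + 1` for every Nielsen-equivalent tuple `M'`. -/
def MinimalTuple {G X : Type*} [Group G] [MetricSpace X] [MulAction G X]
    {n : ℕ} (x : X) (M : Fin n → G) : Prop :=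
  ∀ M' : Fin n → G, NielsenEquiv M M' → tupleLen x M ≤ tupleLen x M' + 1

/-- A freely reduced word in letters `(i, ±1)`: no letter is followed by its inverse. -/
def ReducedWord {n : ℕ} (l : List (Fin n × Bool)) : Prop :=
  l.Chain' fun a b => a.1 = b.1 → a.2 = b.2

/-- The element of `G` represented by a word in the tuple `g` and its inverses. -/
def wordProd {G : Type*} [Group G] {n : ℕ} (g : Fin n → G) (l : List (Fin n × Bool)) : G :=
  (l.map fun p => if p.2 then g p.1 else (g p.1)⁻¹).prod

/-- Conclusion (2): for freely reduced `u = g_{i_1}^{ε_1} ⋯ g_{i_k}^{ε_k}`, any geodesic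
`[x, ux]` lies in the `d`-neighborhood of the broken path
`[x, g_{i_1}^{ε_1} x] ∪ ⋯ ∪ g_{i_1}^{ε_1} ⋯ g_{i_{k-1}}^{ε_{k-1}} [x, g_{i_k}^{ε_k} x]`. -/
def BrokenPathNbhd {G X : Type*} [Group G] [MetricSpace X] [MulAction G X]
    {n : ℕ} (x : X) (g : Fin n → G) (d : ℝ) : Prop :=
  ∀ l : List (Fin n × Bool), l ≠ [] → ReducedWord l →
    ∀ S : Set X, IsGeodesicSegment S x (wordProd g l • x) →
    ∀ seg : ℕ → Set X,
      (∀ j < l.length, IsGeodesicSegment (seg j)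
        (wordProd g (l.take j) • x) (wordProd g (l.take (j + 1)) • x)) →
      ∀ p ∈ S, ∃ j < l.length, ∃ q ∈ seg j, dist p q ≤ d

/-- For freely reduced `u`, any geodesic `[x, ux]` lies in the
`max_i (|g_i|_x/2 + d)`-neighborhood of the orbit `Ux`. -/
def SegInOrbitNbhd {G X : Type*} [Group G] [MetricSpace X] [MulAction G X]
    {n : ℕ} (x : X) (g : Fin n → G) (d : ℝ) : Prop :=
  ∀ l : List (Fin n × Bool), l ≠ [] → ReducedWord l →
    ∀ S : Set X, IsGeodesicSegment S x (wordProd g l • x) →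
    ∀ p ∈ S, ∃ (w : FreeGroup (Fin n)) (i : Fin n),
      dist p ((FreeGroup.lift g w) • x) ≤ dist x (g i • x) / 2 + d

/-- Conclusion (3): for freely reduced `u = g_{i_1}^{ε_1} ⋯ g_{i_k}^{ε_k}` one has
`|u|_x ≥ |g_{i_j}|_x - d` for every letter occurring in `u`. -/
def LetterBound {G X : Type*} [Group G] [MetricSpace X] [MulAction G X]
    {n : ℕ} (x : X) (g : Fin n → G) (d : ℝ) : Prop :=
  ∀ l : List (Fin n × Bool), ReducedWord l → ∀ j : Fin l.length,
    dist x (g (l.get j).1 • x) - d ≤ dist x (wordProd g l • x)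

/-- Conclusion (4): every subsegment of a geodesic `[x, ux]`, `u ∈ U`, of length
greater than `d₄` meets the `max_i (|g_i|_x/2 - c)`-neighborhood of the orbit `Ux`. -/
def SubsegMeetsOrbit {G X : Type*} [Group G] [MetricSpace X] [MulAction G X]
    {n : ℕ} (x : X) (g : Fin n → G) (d₄ c : ℝ) : Prop :=
  ∀ w : FreeGroup (Fin n), ∀ S : Set X, IsGeodesicSegment S x ((FreeGroup.lift g w) • x) →
    ∀ a ∈ S, ∀ b ∈ S, ∀ τ : Set X, IsGeodesicSegment τ a b → τ ⊆ S → d₄ < dist a b →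
    ∃ p ∈ τ, ∃ (v : FreeGroup (Fin n)) (i : Fin n),
      dist p ((FreeGroup.lift g v) • x) ≤ dist x (g i • x) / 2 - c

/-- The dichotomy of Theorem 11 for an `(m+1)`-tuple `f` at base point `x`, with
constants `d₁, d₂, d₃, d₄` and parameter `c`. -/
def Thm11Alt {G X : Type*} [Group G] [MetricSpace X] [MulAction G X]
    {m : ℕ} (x : X) (f : Fin (m + 1) → G) (d₁ d₂ d₃ d₄ c : ℝ) : Prop :=
  (∃ f' : Fin (m + 1) → G, NielsenEquiv f f' ∧ (⨅ y : X, dist y (f' 0 • y)) ≤ d₁) ∨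
  (Function.Injective ⇑(FreeGroup.lift f) ∧ OrbitQIEmbed x f ∧ BrokenPathNbhd x f d₂ ∧
    SegInOrbitNbhd x f d₂ ∧ LetterBound x f d₃ ∧ SubsegMeetsOrbit x f d₄ c)

/-- A naturally parameterized `(λ, ε)`-quasigeodesic on the set `I ⊆ ℝ`. -/
def IsQuasigeodesicOn {X : Type*} [MetricSpace X] (α : ℝ → X) (I : Set ℝ)
    (lam eps : ℝ) : Prop :=
  (∀ s ∈ I, ∀ t ∈ I, dist (α s) (α t) ≤ |s - t|) ∧
  (∀ s ∈ I, ∀ t ∈ I, |s - t| ≤ lam * dist (α s) (α t) + eps)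

/-- A naturally parameterized `T`-local `(λ, ε)`-quasigeodesic on the set `I ⊆ ℝ`. -/
def IsLocalQuasigeodesicOn {X : Type*} [MetricSpace X] (α : ℝ → X) (I : Set ℝ)
    (T lam eps : ℝ) : Prop :=
  (∀ s ∈ I, ∀ t ∈ I, dist (α s) (α t) ≤ |s - t|) ∧
  (∀ s ∈ I, ∀ t ∈ I, |s - t| ≤ T → |s - t| ≤ lam * dist (α s) (α t) + eps)

/-- The data provided by Lemma 15 for the pair `(g, h)`: a point `r` together with
geodesic segments `[x,r]`, `[r,gx]`, `[r,ghx]` such that the broken paths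
`w_g = [x,r] ∪ [r,gx]`, `w_h = [gx,r] ∪ [r,ghx]`, `w_{gh} = [x,r] ∪ [r,ghx]` have
lengths at most `|g|_x + 2`, `|h|_x + 2`, `|gh|_x + 2` respectively and each lies in
the `2`-neighborhood of any geodesic segment joining its endpoints. -/
def Lemma15Data {G X : Type*} [Group G] [MetricSpace X] [MulAction G X]
    (x : X) (g h : G) (r : X) (sxr srg srgh : Set X) : Prop :=
  IsGeodesicSegment sxr x r ∧ IsGeodesicSegment srg r (g • x) ∧
  IsGeodesicSegment srgh r ((g * h) • x) ∧
  dist x r + dist r (g • x) ≤ dist x (g • x) + 2 ∧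
  dist (g • x) r + dist r ((g * h) • x) ≤ dist x (h • x) + 2 ∧
  dist x r + dist r ((g * h) • x) ≤ dist x ((g * h) • x) + 2 ∧
  (∀ S : Set X, IsGeodesicSegment S x (g • x) → InNbhd (sxr ∪ srg) S 2) ∧
  (∀ S : Set X, IsGeodesicSegment S (g • x) ((g * h) • x) → InNbhd (srg ∪ srgh) S 2) ∧
  (∀ S : Set X, IsGeodesicSegment S x ((g * h) • x) → InNbhd (sxr ∪ srgh) S 2)

/-- Conclusion (4) of Proposition 13, for products
`w = h₁ gₙ^{ε₁} h₂ gₙ^{ε₂} ⋯ hₗ gₙ^{εₗ} h_{l+1}` with `hᵢ ∈ H`. -/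
def Prop13Four {G X : Type*} [Group G] [MetricSpace X] [MulAction G X]
    (x : X) (H : Subgroup G) (gn : G) (T L : ℝ) : Prop :=
  ∀ l : ℕ, 1 ≤ l → ∀ (h : ℕ → G) (e : ℕ → ℤ),
    (∀ i ≤ l, h i ∈ H) →
    (∀ i < l, e i = 1 ∨ e i = -1) →
    (∀ i, 1 ≤ i → i < l → e (i - 1) = -(e i) → h i ≠ 1) →
    ∀ A : ℕ → G, A 0 = 1 → (∀ i < l, A (i + 1) = A i * h i * gn ^ (e i)) →
    ∀ S : Set X, IsGeodesicSegment S x ((A l * h l) • x) →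
    ∀ a ∈ S, ∀ b ∈ S, ∀ I : Set X, IsGeodesicSegment I a b → I ⊆ S → 10 * T ≤ dist a b →
    ∃ u v : G,
      ((∃ j < l, u = A j * h j ∧ v = A j * h j * gn ^ (e j)) ∨
        (∃ j ≤ l, u = A j ∧ v = A j * h j)) ∧
      ∃ Seg : Set X, IsGeodesicSegment Seg (u • x) (v • x) ∧
        ∃ a' ∈ Seg, ∃ b' ∈ Seg, ∃ τ : Set X, IsGeodesicSegment τ a' b' ∧ τ ⊆ Seg ∧
          T ≤ dist a' b' ∧ InNbhd τ I (2 * L + 100)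


section Cor17Helpers

variable {X : Type*} [MetricSpace X]

theorem cor17_geod_symm {s : Set X} {a b : X} (h : IsGeodesicSegment s a b) :
    IsGeodesicSegment s b a := by
  obtain ⟨f, hf0, hfd, hiso, hs⟩ := h
  refine ⟨fun t => f (dist a b - t), by simp [dist_comm b a, hfd],
    by simp [dist_comm b a, hf0], ?_, ?_⟩
  · intro t₁ ht₁ t₂ ht₂
    rw [dist_comm b a] at ht₁ ht₂
    rw [hiso _ ⟨by linarith [ht₁.2], by linarith [ht₁.1]⟩
        _ ⟨by linarith [ht₂.2], by linarith [ht₂.1]⟩]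
    rw [show dist a b - t₁ - (dist a b - t₂) = t₂ - t₁ by ring, abs_sub_comm]
  · rw [hs, dist_comm b a]
    ext z
    constructor
    · rintro ⟨t, ht, rfl⟩
      exact ⟨dist a b - t, ⟨by linarith [ht.2], by linarith [ht.1]⟩,
        by show f (dist a b - (dist a b - t)) = f t; rw [sub_sub_cancel]⟩
    · rintro ⟨t, ht, rfl⟩
      exact ⟨dist a b - t, ⟨by linarith [ht.2], by linarith [ht.1]⟩, rfl⟩

theorem cor17_geod_mem_left {s : Set X} {a b : X} (h : IsGeodesicSegment s a b) : a ∈ s := by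
  obtain ⟨f, hf0, hfd, _, hs⟩ := h
  rw [hs]
  exact ⟨0, ⟨le_refl _, dist_nonneg⟩, hf0⟩

theorem cor17_geod_mem_right {s : Set X} {a b : X} (h : IsGeodesicSegment s a b) : b ∈ s :=
  cor17_geod_mem_left (cor17_geod_symm h)

theorem cor17_geod_dist_right {s : Set X} {a b : X} (h : IsGeodesicSegment s a b)
    {z : X} (hz : z ∈ s) : dist z b ≤ dist a b := by
  obtain ⟨f, hf0, hfd, hiso, hs⟩ := h
  rw [hs] at hz
  obtain ⟨t, ht, rfl⟩ := hz
  have h := hiso t ht (dist a b) ⟨dist_nonneg, le_refl _⟩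
  rw [hfd] at h
  rw [h, abs_of_nonpos (by linarith [ht.2])]
  linarith [ht.1]

theorem cor17_geod_subseg {s : Set X} {a b : X} (f : ℝ → X)
    (hiso : ∀ t₁ ∈ Set.Icc (0:ℝ) (dist a b), ∀ t₂ ∈ Set.Icc (0:ℝ) (dist a b),
      dist (f t₁) (f t₂) = |t₁ - t₂|)
    (hs : s = f '' Set.Icc (0:ℝ) (dist a b))
    {u₁ u₂ : ℝ} (h0 : 0 ≤ u₁) (h12 : u₁ ≤ u₂) (h2 : u₂ ≤ dist a b) :
    IsGeodesicSegment (f '' Set.Icc u₁ u₂) (f u₁) (f u₂) ∧ f '' Set.Icc u₁ u₂ ⊆ s := by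
  have hmem : ∀ u, u₁ ≤ u → u ≤ u₂ → u ∈ Set.Icc (0:ℝ) (dist a b) :=
    fun u hu hu' => ⟨h0.trans hu, hu'.trans h2⟩
  have hd' : dist (f u₁) (f u₂) = u₂ - u₁ := by
    rw [hiso u₁ (hmem u₁ le_rfl h12) u₂ (hmem u₂ h12 le_rfl),
      abs_of_nonpos (by linarith)]
    ring
  constructor
  · refine ⟨fun t => f (u₁ + t), by simp, ?_, ?_, ?_⟩
    · show f (u₁ + dist (f u₁) (f u₂)) = f u₂
      rw [hd']
      congr 1
      ring
    · intro t₁ ht₁ t₂ ht₂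
      rw [hd'] at ht₁ ht₂
      show dist (f (u₁ + t₁)) (f (u₁ + t₂)) = |t₁ - t₂|
      rw [hiso _ (hmem _ (by linarith [ht₁.1]) (by linarith [ht₁.2]))
          _ (hmem _ (by linarith [ht₂.1]) (by linarith [ht₂.2]))]
      congr 1
      ring
    · rw [hd']
      ext z
      constructor
      · rintro ⟨t, ht, rfl⟩
        exact ⟨t - u₁, ⟨by linarith [ht.1], by linarith [ht.2]⟩,
          by show f (u₁ + (t - u₁)) = f t; congr 1; ring⟩
      · rintro ⟨t, ht, rfl⟩
        exact ⟨u₁ + t, ⟨by linarith [ht.1], by linarith [ht.2]⟩, rfl⟩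
  · rw [hs]
    exact Set.image_mono (fun z hz => ⟨h0.trans hz.1, hz.2.trans h2⟩)

theorem cor17_close_geods (hgeo : GeodesicSpace X) (hhyp : DeltaHyperbolic X 1)
    {a b a' b' : X} {s t : Set X} (hs : IsGeodesicSegment s a b)
    (ht : IsGeodesicSegment t a' b') (haa : dist a a' ≤ 2) (hbb : dist b b' ≤ 2) :
    InNbhd s t 4 := by
  obtain ⟨s1, hs1⟩ := hgeo a b'
  obtain ⟨s2, hs2⟩ := hgeo b b'
  obtain ⟨s3, hs3⟩ := hgeo a a'
  have H1 : InNbhd s (s1 ∪ s2) 1 := hhyp a b b' s s1 s2 hs hs1 hs2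
  have H2 : InNbhd s1 (s3 ∪ t) 1 := hhyp a b' a' s1 s3 t hs1 hs3 (cor17_geod_symm ht)
  intro r hr
  obtain ⟨z, hz, hrz⟩ := H1 r hr
  rcases hz with hz | hz
  · obtain ⟨w, hw, hzw⟩ := H2 z hz
    rcases hw with hw | hw
    · have hwa : dist w a' ≤ 2 := (cor17_geod_dist_right hs3 hw).trans haa
      exact ⟨a', cor17_geod_mem_left ht, by
        calc dist r a' ≤ dist r z + dist z w + dist w a' := dist_triangle4 r z w a'
        _ ≤ 4 := by linarith⟩
    · exact ⟨w, hw, by linarith [dist_triangle r z w]⟩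
  · have hzb : dist z b' ≤ 2 := (cor17_geod_dist_right hs2 hz).trans hbb
    exact ⟨b', cor17_geod_mem_right ht, by linarith [dist_triangle r z b']⟩

theorem cor17_key (hgeo : GeodesicSpace X) (hhyp : DeltaHyperbolic X 1)
    {σ τ tsub : Set X} {P Q p₁ p₂ q₁ q₂ : X} {D : ℝ}
    (hσ : IsGeodesicSegment σ P Q)
    (htsub : IsGeodesicSegment tsub p₁ p₂) (htsubτ : tsub ⊆ τ)
    (hq₁ : q₁ ∈ σ) (hq₂ : q₂ ∈ σ)
    (h1 : dist p₁ q₁ ≤ 2) (h2 : dist p₂ q₂ ≤ 2) (hDd : D ≤ dist p₁ p₂) :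
    ∃ a' ∈ σ, ∃ b' ∈ σ, ∃ τ' : Set X, IsGeodesicSegment τ' a' b' ∧ τ' ⊆ σ ∧
      D - 40 ≤ dist a' b' ∧ InNbhd τ' τ 24 := by
  obtain ⟨fσ, hf0, hfd, hfiso, hσeq⟩ := hσ
  obtain ⟨u₁, hu₁, rfl⟩ : ∃ u ∈ Set.Icc (0:ℝ) (dist P Q), fσ u = q₁ := by
    rw [hσeq] at hq₁; exact hq₁
  obtain ⟨u₂, hu₂, rfl⟩ : ∃ u ∈ Set.Icc (0:ℝ) (dist P Q), fσ u = q₂ := by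
    rw [hσeq] at hq₂; exact hq₂
  have hdq : D - 4 ≤ dist (fσ u₁) (fσ u₂) := by
    have h4 := dist_triangle4 p₁ (fσ u₁) (fσ u₂) p₂
    rw [dist_comm (fσ u₂) p₂] at h4
    linarith
  have weaken : ∀ {A B : Set X}, InNbhd A B 4 → B ⊆ τ → InNbhd A τ 24 := by
    rintro A B hAB hBτ p hp
    obtain ⟨q, hq, hd⟩ := hAB p hp
    exact ⟨q, hBτ hq, by linarith⟩
  rcases le_total u₁ u₂ with hu | hu
  · obtain ⟨hgeod, hsub⟩ := cor17_geod_subseg fσ hfiso hσeq hu₁.1 hu hu₂.2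
    refine ⟨fσ u₁, hq₁, fσ u₂, hq₂, _, hgeod, hsub, by linarith, ?_⟩
    exact weaken (cor17_close_geods hgeo hhyp hgeod htsub (by rw [dist_comm]; exact h1)
      (by rw [dist_comm]; exact h2)) htsubτ
  · obtain ⟨hgeod, hsub⟩ := cor17_geod_subseg fσ hfiso hσeq hu₂.1 hu hu₁.2
    refine ⟨fσ u₂, hq₂, fσ u₁, hq₁, _, hgeod, hsub,
      by rw [dist_comm]; linarith, ?_⟩
    exact weaken (cor17_close_geods hgeo hhyp hgeod (cor17_geod_symm htsub)
      (by rw [dist_comm]; exact h2) (by rw [dist_comm]; exact h1)) htsubτ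

end Cor17Helpers

/-- **Corollary 17.** Let `f, g, h ∈ G` act by isometries on a `1`-hyperbolic geodesic
space with base point `x`, and let `τ` be a subsegment of length `3D` of a geodesic
`[x, ghfx]`. Then the `24`-neighborhood of `τ` contains a subsegment of length at least
`D - 40` of one of the geodesic segments `[x, gx]`, `g[x, hx]`, `gh[x, fx]`. -/
theorem corollary17
    (G : Type*) [Group G] (X : Type*) [MetricSpace X] [MulAction G X]
    (hgeo : GeodesicSpace X) (hhyp : DeltaHyperbolic X 1)
    (hiso : ∀ (g : G) (a b : X), dist (g • a) (g • b) = dist a b)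
    (x : X) (f g h : G) (D : ℝ) (hD : 0 < D)
    (S : Set X) (hS : IsGeodesicSegment S x ((g * h * f) • x))
    (a b : X) (ha : a ∈ S) (hb : b ∈ S)
    (τ : Set X) (hτ : IsGeodesicSegment τ a b) (hτS : τ ⊆ S)
    (hlen : dist a b = 3 * D) :
    ∃ u v : G,
      ((u = 1 ∧ v = g) ∨ (u = g ∧ v = g * h) ∨ (u = g * h ∧ v = g * h * f)) ∧
      ∃ Seg : Set X, IsGeodesicSegment Seg (u • x) (v • x) ∧
        ∃ a' ∈ Seg, ∃ b' ∈ Seg, ∃ τ' : Set X, IsGeodesicSegment τ' a' b' ∧ τ' ⊆ Seg ∧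
          D - 40 ≤ dist a' b' ∧ InNbhd τ' τ 24 := by
  classical
  obtain ⟨Sxg, hSxg⟩ := hgeo x (g • x)
  obtain ⟨Sgh, hSgh⟩ := hgeo (g • x) ((g * h) • x)
  obtain ⟨Sghf, hSghf⟩ := hgeo ((g * h) • x) ((g * h * f) • x)
  obtain ⟨Sxgh, hSxgh⟩ := hgeo x ((g * h) • x)
  have H1 : InNbhd S (Sxgh ∪ Sghf) 1 :=
    hhyp x ((g * h * f) • x) ((g * h) • x) S Sxgh Sghf hS hSxgh (cor17_geod_symm hSghf)
  have H2 : InNbhd Sxgh (Sxg ∪ Sgh) 1 :=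
    hhyp x ((g * h) • x) (g • x) Sxgh Sxg Sgh hSxgh hSxg (cor17_geod_symm hSgh)
  have Hu : ∀ p ∈ S, ∃ q, (q ∈ Sxg ∨ q ∈ Sgh ∨ q ∈ Sghf) ∧ dist p q ≤ 2 := by
    intro p hp
    obtain ⟨z, hz, hpz⟩ := H1 p hp
    rcases hz with hz | hz
    · obtain ⟨w, hw, hzw⟩ := H2 z hz
      rcases hw with hw | hw
      · exact ⟨w, Or.inl hw, by linarith [dist_triangle p z w]⟩
      · exact ⟨w, Or.inr (Or.inl hw), by linarith [dist_triangle p z w]⟩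
    · exact ⟨z, Or.inr (Or.inr hz), by linarith⟩
  obtain ⟨F, hF0, hFd, hFiso, hτeq⟩ := hτ
  set p : Fin 4 → X := fun k => F ((k : ℕ) * D) with hp
  have hk3 : ∀ k : Fin 4, ((k : ℕ) : ℝ) ≤ 3 := by
    intro k
    exact_mod_cast Nat.le_of_lt_succ k.isLt
  have hkmem : ∀ k : Fin 4, ((k : ℕ) : ℝ) * D ∈ Set.Icc (0 : ℝ) (dist a b) := by
    intro k
    constructor
    · positivity
    · rw [hlen]
      nlinarith [hk3 k]
  have hpmem : ∀ k : Fin 4, p k ∈ τ := by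
    intro k
    rw [hτeq]
    exact ⟨(k : ℕ) * D, hkmem k, rfl⟩
  choose q hq hqd using fun k => Hu (p k) (hτS (hpmem k))
  set c : Fin 4 → Fin 3 := fun k => if q k ∈ Sxg then 0 else if q k ∈ Sgh then 1 else 2
    with hc
  have main : ∀ i j : Fin 4, i < j → c i = c j →
      ∃ u v : G,
      ((u = 1 ∧ v = g) ∨ (u = g ∧ v = g * h) ∨ (u = g * h ∧ v = g * h * f)) ∧
      ∃ Seg : Set X, IsGeodesicSegment Seg (u • x) (v • x) ∧
        ∃ a' ∈ Seg, ∃ b' ∈ Seg, ∃ τ' : Set X, IsGeodesicSegment τ' a' b' ∧ τ' ⊆ Seg ∧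
          D - 40 ≤ dist a' b' ∧ InNbhd τ' τ 24 := by
    intro i j hij hcij
    have hijR : ((i : ℕ) : ℝ) + 1 ≤ ((j : ℕ) : ℝ) := by
      exact_mod_cast Nat.succ_le_of_lt hij
    have hle : ((i : ℕ) : ℝ) * D ≤ ((j : ℕ) : ℝ) * D := by nlinarith
    obtain ⟨htsub, htsubτ'⟩ := cor17_geod_subseg F hFiso hτeq (hkmem i).1 hle (hkmem j).2
    have hdp : D ≤ dist (p i) (p j) := by
      have hd := hFiso _ (hkmem i) _ (hkmem j)
      simp only [hp]
      rw [hd, abs_of_nonpos (by linarith)]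
      nlinarith
    have hsame : (q i ∈ Sxg ∧ q j ∈ Sxg) ∨ (q i ∈ Sgh ∧ q j ∈ Sgh) ∨
        (q i ∈ Sghf ∧ q j ∈ Sghf) := by
      have hqi := hq i
      have hqj := hq j
      by_cases a1 : q i ∈ Sxg <;> by_cases a2 : q j ∈ Sxg <;>
        by_cases b1 : q i ∈ Sgh <;> by_cases b2 : q j ∈ Sgh <;>
        simp only [hc, a1, a2, b1, b2, if_true, if_false] at hcij <;>
        tauto
    rcases hsame with ⟨h1, h2⟩ | ⟨h1, h2⟩ | ⟨h1, h2⟩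
    · obtain ⟨a', ha', b', hb', τ', hτ', hrest⟩ :=
        cor17_key hgeo hhyp hSxg htsub htsubτ' h1 h2 (hqd i) (hqd j) hdp
      exact ⟨1, g, Or.inl ⟨rfl, rfl⟩, Sxg, by rw [one_smul]; exact hSxg,
        a', ha', b', hb', τ', hτ', hrest⟩
    · obtain ⟨a', ha', b', hb', τ', hτ', hrest⟩ :=
        cor17_key hgeo hhyp hSgh htsub htsubτ' h1 h2 (hqd i) (hqd j) hdp
      exact ⟨g, g * h, Or.inr (Or.inl ⟨rfl, rfl⟩), Sgh, hSgh,
        a', ha', b', hb', τ', hτ', hrest⟩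
    · obtain ⟨a', ha', b', hb', τ', hτ', hrest⟩ :=
        cor17_key hgeo hhyp hSghf htsub htsubτ' h1 h2 (hqd i) (hqd j) hdp
      exact ⟨g * h, g * h * f, Or.inr (Or.inr ⟨rfl, rfl⟩), Sghf, hSghf,
        a', ha', b', hb', τ', hτ', hrest⟩
  obtain ⟨i, j, hij, hcij⟩ := Fintype.exists_ne_map_eq_of_card_lt c (by simp)
  rcases lt_or_gt_of_ne hij with hlt | hgt
  · exact main i j hlt hcij
  · exact main j i hgt hcij.symm
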